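/- Fix positive integers p and n. The map sending e = (e_1,…,e_{p+n}) to (e_{p+1},…,e_{p+n}) is a bijection from the set of inversion sequences e of length n + p avoiding the pattern 0021 with iar(e) = p onto the set 𝐈_{n,p}(021) of sequences (f_1,…,f_n) of nonnegative integers with f_1 ≤ p − 1 and f_i ≤ p + i − 1 for 2 ≤ i ≤ n that avoid the pattern 021. -/

import Mathlib

/-- A word `w` contains the pattern `p`: there is an increasing choice of positions
whose entries are order-isomorphic to `p`. -/
def PatContains {n k : ℕ} (w : Fin n → ℕ) (p : Fin k → ℕ) : Prop :=
  ∃ f : Fin k → Fin n, StrictMono f ∧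
    (∀ a b : Fin k, w (f a) < w (f b) ↔ p a < p b) ∧
    (∀ a b : Fin k, w (f a) = w (f b) ↔ p a = p b)

/-- A word `w` avoids the pattern `p`. -/
def PatAvoids {n k : ℕ} (w : Fin n → ℕ) (p : Fin k → ℕ) : Prop := ¬ PatContains w p

/-- The number of ascents of a word: positions `i` with `w i < w (i+1)`. -/
noncomputable def ascNum {n : ℕ} (w : Fin n → ℕ) : ℕ :=
  Nat.card {q : Fin n × Fin n // (q.2 : ℕ) = (q.1 : ℕ) + 1 ∧ w q.1 < w q.2}

/-- The number of descents of a word: positions `i` with `w i > w (i+1)`. -/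
noncomputable def desNum {n : ℕ} (w : Fin n → ℕ) : ℕ :=
  Nat.card {q : Fin n × Fin n // (q.2 : ℕ) = (q.1 : ℕ) + 1 ∧ w q.2 < w q.1}

/-- `ides π` is the number of descents of the inverse permutation of `π`. -/
noncomputable def ides {n : ℕ} (π : Equiv.Perm (Fin n)) : ℕ :=
  desNum (fun i => ((π.symm i : Fin n) : ℕ))

/-- A permutation (viewed as the word of its values) avoids all of
the patterns 3124, 42153, 24153. -/
def AvoidsI {n : ℕ} (π : Equiv.Perm (Fin n)) : Prop :=
  PatAvoids (fun i => ((π i : Fin n) : ℕ)) ![3,1,2,4] ∧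
  PatAvoids (fun i => ((π i : Fin n) : ℕ)) ![4,2,1,5,3] ∧
  PatAvoids (fun i => ((π i : Fin n) : ℕ)) ![2,4,1,5,3]

/-- The `i`-th letter of the word `w_π` is `L`, i.e. the entry `i+2` (1-based)
lies strictly to the left of the entry `1`.  (0-based: the value `i+1` lies to
the left of the value `0`.) -/
def permLetterL {n : ℕ} (π : Equiv.Perm (Fin n)) (i : Fin (n - 1)) : Prop :=
  π.symm ⟨(i : ℕ) + 1, by have := i.isLt; omega⟩ < π.symm ⟨0, by have := i.isLt; omega⟩

/-- The word `w_π` has an alternating subword of length `k`. -/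
def HasAltSub {n : ℕ} (π : Equiv.Perm (Fin n)) (k : ℕ) : Prop :=
  ∃ f : Fin k → Fin (n - 1), StrictMono f ∧
    ∀ a b : Fin k, (b : ℕ) = (a : ℕ) + 1 →
      ¬ (permLetterL π (f a) ↔ permLetterL π (f b))

/-- `alt(π) = k`: the longest alternating subword of `w_π` has length exactly `k`. -/
def altEq {n : ℕ} (π : Equiv.Perm (Fin n)) (k : ℕ) : Prop :=
  HasAltSub π k ∧ ¬ HasAltSub π (k + 1)

/-- The first letter of `w_π` is `L`, i.e. `π⁻¹(2) < π⁻¹(1)`. -/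
def FirstL {n : ℕ} (π : Equiv.Perm (Fin n)) : Prop :=
  ∃ a b : Fin n, (a : ℕ) = 0 ∧ (b : ℕ) = 1 ∧ π.symm b < π.symm a

/-- The first letter of `w_π` is `R`, i.e. `π⁻¹(2) > π⁻¹(1)`. -/
def FirstR {n : ℕ} (π : Equiv.Perm (Fin n)) : Prop :=
  ∃ a b : Fin n, (a : ℕ) = 0 ∧ (b : ℕ) = 1 ∧ π.symm a < π.symm b

/-- Deleting the first `p` entries of a sequence of length `n + p`. -/
def restrictSeq (p n : ℕ) (e : Fin (n + p) → ℕ) : Fin n → ℕ :=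
  fun j => e ⟨p + (j : ℕ), by have := j.isLt; omega⟩

section helpers

lemma pat021_eval : ∀ i : Fin 3,
    (![0,2,1] : Fin 3 → ℕ) i = if (i:ℕ) = 0 then 0 else if (i:ℕ) = 1 then 2 else 1 := by
  decide

lemma pat0021_eval : ∀ i : Fin 4,
    (![0,0,2,1] : Fin 4 → ℕ) i =
      if (i:ℕ) = 0 then 0 else if (i:ℕ) = 1 then 0 else if (i:ℕ) = 2 then 2 else 1 := by
  decide

lemma contains021 {m : ℕ} (w : Fin m → ℕ) (a b c : Fin m)
    (hab : (a:ℕ) < b) (hbc : (b:ℕ) < c)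
    (h1 : w a < w c) (h2 : w c < w b) :
    PatContains w ![0,2,1] := by
  refine ⟨fun i => if (i:ℕ) = 0 then a else if (i:ℕ) = 1 then b else c, ?_, ?_, ?_⟩
  · intro i j hij
    beta_reduce
    simp only [Fin.lt_def] at *
    have hi := i.isLt; have hj := j.isLt
    split_ifs <;> first | omega | (simp <;> omega)
  · intro i j
    have hi := i.isLt; have hj := j.isLt
    beta_reduce
    rw [pat021_eval i, pat021_eval j]
    split_ifs <;> first | omega | (simp <;> omega)
  · intro i j
    have hi := i.isLt; have hj := j.isLt
    beta_reduce
    rw [pat021_eval i, pat021_eval j]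
    split_ifs <;> first | omega | (simp <;> omega)

lemma contains0021 {m : ℕ} (w : Fin m → ℕ) (a b c d : Fin m)
    (hab : (a:ℕ) < b) (hbc : (b:ℕ) < c) (hcd : (c:ℕ) < d)
    (h0 : w a = w b) (h1 : w b < w d) (h2 : w d < w c) :
    PatContains w ![0,0,2,1] := by
  refine ⟨fun i => if (i:ℕ) = 0 then a else if (i:ℕ) = 1 then b else
      if (i:ℕ) = 2 then c else d, ?_, ?_, ?_⟩
  · intro i j hij
    beta_reduce
    simp only [Fin.lt_def] at *
    have hi := i.isLt; have hj := j.isLt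
    split_ifs <;> first | omega | (simp <;> omega)
  · intro i j
    have hi := i.isLt; have hj := j.isLt
    beta_reduce
    rw [pat0021_eval i, pat0021_eval j]
    split_ifs <;> first | omega | (simp <;> omega)
  · intro i j
    have hi := i.isLt; have hj := j.isLt
    beta_reduce
    rw [pat0021_eval i, pat0021_eval j]
    split_ifs <;> first | omega | (simp <;> omega)

lemma extract021 {m : ℕ} (w : Fin m → ℕ) (h : PatContains w ![0,2,1]) :
    ∃ a b c : Fin m, a < b ∧ b < c ∧ w a < w c ∧ w c < w b := by
  obtain ⟨g, hmono, hlt, _⟩ := h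
  exact ⟨g 0, g 1, g 2, hmono (by decide), hmono (by decide),
    (hlt 0 2).mpr (by decide), (hlt 2 1).mpr (by decide)⟩

lemma extract0021 {m : ℕ} (w : Fin m → ℕ) (h : PatContains w ![0,0,2,1]) :
    ∃ a b c d : Fin m, a < b ∧ b < c ∧ c < d ∧ w a = w b ∧ w b < w d ∧ w d < w c := by
  obtain ⟨g, hmono, hlt, heq⟩ := h
  exact ⟨g 0, g 1, g 2, g 3, hmono (by decide), hmono (by decide), hmono (by decide),
    (heq 0 1).mpr (by decide), (hlt 1 3).mpr (by decide), (hlt 3 2).mpr (by decide)⟩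

def extendSeq (p n : ℕ) (f : Fin n → ℕ) : Fin (n + p) → ℕ :=
  fun i => if h : (i:ℕ) < p then (i:ℕ) else f ⟨(i:ℕ) - p, by have := i.isLt; omega⟩

lemma extendSeq_lt {p n : ℕ} (f : Fin n → ℕ) (i : Fin (n + p)) (h : (i:ℕ) < p) :
    extendSeq p n f i = (i:ℕ) := by simp [extendSeq, h]

lemma extendSeq_ge {p n : ℕ} (f : Fin n → ℕ) (i : Fin (n + p)) (h : ¬ (i:ℕ) < p)
    (hj : (i:ℕ) - p < n) : extendSeq p n f i = f ⟨(i:ℕ) - p, hj⟩ := by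
  simp [extendSeq, h]

end helpers

/-- for fixed positive `p` and `n`, deleting the first `p` entries is a
bijection from the 0021-avoiding inversion sequences of length `n + p` with
`iar = p` (0-based: `e i = i` for `i < p` and `e` at index `p` is `≤ p − 1`) onto
`𝐈_{n,p}(021)`, the 021-avoiding sequences `f` of nonnegative integers with
`f₁ ≤ p − 1` and `f_i ≤ p + i − 1` for `2 ≤ i ≤ n` (0-based: `f j ≤ p + j` for `j ≥ 1`). -/
theorem stmt_12 (p n : ℕ) (hp : 1 ≤ p) (hn : 1 ≤ n) :
    Set.BijOn (restrictSeq p n)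
      {e : Fin (n + p) → ℕ |
        (∀ i : Fin (n + p), e i ≤ (i : ℕ)) ∧ PatAvoids e ![0,0,2,1] ∧
        (∀ i : Fin (n + p), (i : ℕ) < p → e i = (i : ℕ)) ∧
        (∀ i : Fin (n + p), (i : ℕ) = p → e i ≤ p - 1)}
      {f : Fin n → ℕ | PatAvoids f ![0,2,1] ∧
        (∀ j : Fin n, (j : ℕ) = 0 → f j ≤ p - 1) ∧
        (∀ j : Fin n, 1 ≤ (j : ℕ) → f j ≤ p + (j : ℕ))} := by
  have hpn : p < n + p := by omega
  refine ⟨?_, ?_, ?_⟩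
  · -- MapsTo
    rintro e ⟨h1, h2, h3, h4⟩
    simp only [Set.mem_setOf_eq]
    refine ⟨?_, ?_, ?_⟩
    · -- avoids 021
      intro hc
      obtain ⟨a, b, c, hab, hbc, hv1, hv2⟩ := extract021 _ hc
      simp only [restrictSeq] at hv1 hv2
      rw [Fin.lt_def] at hab hbc
      have ha := a.isLt; have hb := b.isLt; have hcc := c.isLt
      by_cases hv : e ⟨p + (a:ℕ), by omega⟩ < p
      · apply h2
        refine contains0021 e ⟨e ⟨p + (a:ℕ), by omega⟩, by omega⟩
          ⟨p + (a:ℕ), by omega⟩ ⟨p + (b:ℕ), by omega⟩ ⟨p + (c:ℕ), by omega⟩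
          (by simpa using by omega) (by simpa using by omega) (by simpa using by omega)
          ?_ ?_ ?_
        · exact h3 _ (by simpa using hv)
        · exact hv1
        · exact hv2
      · apply h2
        have hu : e ⟨p, hpn⟩ ≤ p - 1 := h4 ⟨p, hpn⟩ rfl
        have hu' : e ⟨p, hpn⟩ < p := by omega
        refine contains0021 e ⟨e ⟨p, hpn⟩, by omega⟩ ⟨p, hpn⟩
          ⟨p + (b:ℕ), by omega⟩ ⟨p + (c:ℕ), by omega⟩
          (by simpa using hu') (by simpa using by omega) (by simpa using by omega)
          ?_ ?_ ?_
        · exact h3 _ (by simpa using hu')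
        · omega
        · exact hv2
    · intro j hj
      have h4' := h4 ⟨p + (j:ℕ), by have := j.isLt; omega⟩ (by simp [hj])
      exact h4'
    · intro j _
      exact h1 ⟨p + (j:ℕ), by have := j.isLt; omega⟩
  · -- InjOn
    intro e1 he1 e2 he2 heq
    funext i
    by_cases hi : (i:ℕ) < p
    · rw [he1.2.2.1 i hi, he2.2.2.1 i hi]
    · have hj : (i:ℕ) - p < n := by have := i.isLt; omega
      have key := congrFun heq ⟨(i:ℕ) - p, hj⟩
      simp only [restrictSeq] at key
      have hix : (⟨p + ((i:ℕ) - p), by have := i.isLt; omega⟩ : Fin (n+p)) = i := by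
        ext; simp; omega
      rwa [hix] at key
  · -- SurjOn
    intro f hf
    obtain ⟨hf1, hf2, hf3⟩ := hf
    refine ⟨extendSeq p n f, ⟨?_, ?_, ?_, ?_⟩, ?_⟩
    · -- bound
      intro i
      by_cases hi : (i:ℕ) < p
      · simp [extendSeq, hi]
      · have hji : (i:ℕ) - p < n := by have := i.isLt; omega
        rw [extendSeq_ge f i hi hji]
        by_cases hi0 : (i:ℕ) = p
        · have := hf2 ⟨(i:ℕ) - p, by have := i.isLt; omega⟩ (by simp; omega)
          omega
        · have := hf3 ⟨(i:ℕ) - p, by have := i.isLt; omega⟩ (by simp; omega)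
          simp only [Fin.val_mk] at this
          omega
    · -- avoids 0021
      intro hc
      obtain ⟨a, b, c, d, hab, hbc, hcd, hw0, hw1, hw2⟩ := extract0021 _ hc
      rw [Fin.lt_def] at hab hbc hcd
      have hbp : p ≤ (b:ℕ) := by
        by_contra hbp
        have hap : (a:ℕ) < p := by omega
        have hbp' : (b:ℕ) < p := by omega
        rw [extendSeq_lt f a hap, extendSeq_lt f b hbp'] at hw0
        omega
      have hb := b.isLt; have hc' := c.isLt; have hd := d.isLt
      have h1b : ¬ (b:ℕ) < p := by omega
      have h2b : (b:ℕ) - p < n := by omega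
      have h1c : ¬ (c:ℕ) < p := by omega
      have h2c : (c:ℕ) - p < n := by omega
      have h1d : ¬ (d:ℕ) < p := by omega
      have h2d : (d:ℕ) - p < n := by omega
      rw [extendSeq_ge f b h1b h2b] at hw0 hw1
      rw [extendSeq_ge f c h1c h2c] at hw2
      rw [extendSeq_ge f d h1d h2d] at hw1 hw2
      exact hf1 (contains021 f ⟨(b:ℕ) - p, by omega⟩ ⟨(c:ℕ) - p, by omega⟩
        ⟨(d:ℕ) - p, by omega⟩ (by simpa using by omega) (by simpa using by omega) hw1 hw2)
    · intro i hi
      exact extendSeq_lt f i hi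
    · intro i hi
      have h1i : ¬ (i:ℕ) < p := by omega
      have h2i : (i:ℕ) - p < n := by have := i.isLt; omega
      rw [extendSeq_ge f i h1i h2i]
      exact hf2 ⟨(i:ℕ) - p, by have := i.isLt; omega⟩ (by simp; omega)
    · -- restrictSeq ∘ extendSeq = f
      funext j
      have hj := j.isLt
      simp only [restrictSeq]
      have h1j : ¬ ((⟨p + (j:ℕ), by omega⟩ : Fin (n+p)) : ℕ) < p := by simp
      have h2j : ((⟨p + (j:ℕ), by omega⟩ : Fin (n+p)) : ℕ) - p < n := by simp
      rw [extendSeq_ge f ⟨p + (j:ℕ), by omega⟩ h1j h2j]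
      congr 1
      ext
      simp
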